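/- arXiv:1705.02698 — 4 statements merged into one kernel-verified Lean document; each statement's English description precedes it below -/
import Mathlib

section
/- For every f ∈ H, the approximate reconstruction satisfies the error estimate ‖f − G(U₁ f, A(P_n(U₁ f)))‖ ≤ ‖G‖ · ‖A‖ · ‖U₁‖ · infDist(f, W_n), where infDist(f, W_n) = inf_{g ∈ W_n} ‖f − g‖ and ‖G‖, ‖A‖, ‖U₁‖ denote operator norms. -/
/-- Estimate (ere2) of Theorem 2: if `G` exactly inverts the full-view data
(`G (U₁ f, U₂ f) = f` on the ℓ²-product `Y = Y₁ ×₂ Y₂`), then the reconstruction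
from the learned extension satisfies
`‖f − G(U₁ f, Â_n(U₁ f))‖ ≤ ‖G‖ ‖A‖ ‖U₁‖ infDist(f, W_n)`. -/
theorem learned_reconstruction_error_estimate
    {H Y₁ Y₂ : Type*}
    [NormedAddCommGroup H] [InnerProductSpace ℝ H] [CompleteSpace H]
    [NormedAddCommGroup Y₁] [InnerProductSpace ℝ Y₁] [CompleteSpace Y₁]
    [NormedAddCommGroup Y₂] [InnerProductSpace ℝ Y₂] [CompleteSpace Y₂]
    (U₁ : H →L[ℝ] Y₁) (U₂ : H →L[ℝ] Y₂) (A : Y₁ →L[ℝ] Y₂)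
    (hA : ∀ g : H, A (U₁ g) = U₂ g)
    (G : WithLp 2 (Y₁ × Y₂) →L[ℝ] H)
    (hG : ∀ g : H, G ((WithLp.equiv 2 (Y₁ × Y₂)).symm (U₁ g, U₂ g)) = g)
    (n : ℕ) (fi : Fin n → H)
    (Wn : Submodule ℝ H) (hW : Wn = Submodule.span ℝ (Set.range fi))
    (Vn : Submodule ℝ Y₁)
    (hV : Vn = Submodule.span ℝ (Set.range fun i => U₁ (fi i)))
    (P : Y₁ →L[ℝ] Y₁)
    (hP : ∀ u : Y₁, P u ∈ Vn ∧ ∀ v ∈ Vn, (inner ℝ (u - P u) v : ℝ) = 0)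
    (f : H) :
    ‖f - G ((WithLp.equiv 2 (Y₁ × Y₂)).symm (U₁ f, A (P (U₁ f))))‖ ≤
      ‖G‖ * ‖A‖ * ‖U₁‖ * Metric.infDist f (Wn : Set H) := by
  set u : Y₁ := U₁ f with hu
  set d : Y₁ := u - P u with hd
  -- key identity
  have key : f - G ((WithLp.equiv 2 (Y₁ × Y₂)).symm (u, A (P u)))
      = G ((WithLp.equiv 2 (Y₁ × Y₂)).symm (0, A d)) := by
    conv_lhs => rw [← hG f, ← hA f]
    rw [← map_sub, WithLp.equiv_symm_apply, ← WithLp.toLp_sub]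
    congr 1
    simp [hd, hu, map_sub, Prod.mk_sub_mk]
  -- bound by ‖G‖ ‖A‖ ‖d‖
  have hbound : ‖f - G ((WithLp.equiv 2 (Y₁ × Y₂)).symm (u, A (P u)))‖
      ≤ ‖G‖ * ‖A‖ * ‖d‖ := by
    rw [key]
    calc ‖G ((WithLp.equiv 2 (Y₁ × Y₂)).symm (0, A d))‖
        ≤ ‖G‖ * ‖(WithLp.equiv 2 (Y₁ × Y₂)).symm (0, A d)‖ := G.le_opNorm _
      _ = ‖G‖ * ‖A d‖ := by rw [WithLp.equiv_symm_apply, WithLp.norm_toLp_snd]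
      _ ≤ ‖G‖ * (‖A‖ * ‖d‖) := by
          exact mul_le_mul_of_nonneg_left (A.le_opNorm _) G.opNorm_nonneg
      _ = ‖G‖ * ‖A‖ * ‖d‖ := by ring
  -- minimization property of the orthogonal projection
  have hmin : ∀ g ∈ Wn, ‖d‖ ≤ ‖f - g‖ * ‖U₁‖ := by
    intro g hg
    have hUg : U₁ g ∈ Vn := by
      rw [hV]
      have : g ∈ Submodule.span ℝ (Set.range fi) := hW ▸ hg
      have := Submodule.apply_mem_span_image_of_mem_span (U₁ : H →ₗ[ℝ] Y₁) this
      rwa [← Set.range_comp] at this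
    have hmem : P u - U₁ g ∈ Vn := Vn.sub_mem (hP u).1 hUg
    have horto : (inner ℝ d (P u - U₁ g) : ℝ) = 0 := (hP u).2 _ hmem
    have hdle : ‖d‖ ≤ ‖u - U₁ g‖ := by
      have : u - U₁ g = d + (P u - U₁ g) := by rw [hd]; abel
      rw [this]
      have hsq : ‖d + (P u - U₁ g)‖ ^ 2 = ‖d‖ ^ 2 + ‖P u - U₁ g‖ ^ 2 := by
        rw [norm_add_sq_real, horto]
        ring
      nlinarith [norm_nonneg (d + (P u - U₁ g)), norm_nonneg d,
        sq_nonneg ‖P u - U₁ g‖]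
    calc ‖d‖ ≤ ‖u - U₁ g‖ := hdle
      _ = ‖U₁ (f - g)‖ := by rw [map_sub]
      _ ≤ ‖U₁‖ * ‖f - g‖ := U₁.le_opNorm _
      _ = ‖f - g‖ * ‖U₁‖ := by ring
  -- pass to infimum
  have hC : (0:ℝ) ≤ ‖G‖ * ‖A‖ := mul_nonneg G.opNorm_nonneg A.opNorm_nonneg
  have hne : ((Wn : Set H)).Nonempty := ⟨0, Wn.zero_mem⟩
  refine le_of_forall_pos_le_add fun ε hε => ?_
  set C := ‖G‖ * ‖A‖ * ‖U₁‖ with hCdef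
  have hC0 : 0 ≤ C := mul_nonneg hC U₁.opNorm_nonneg
  rcases eq_or_lt_of_le hC0 with h0 | hpos
  · -- C = 0
    have h00 : ‖G‖ * ‖A‖ * ‖d‖ ≤ C * ‖f - 0‖ := by
      calc ‖G‖ * ‖A‖ * ‖d‖ ≤ ‖G‖ * ‖A‖ * (‖f - 0‖ * ‖U₁‖) :=
            mul_le_mul_of_nonneg_left (hmin 0 Wn.zero_mem) hC
        _ = C * ‖f - 0‖ := by rw [hCdef]; ring
    rw [← h0] at h00 ⊢
    simp only [zero_mul, zero_add] at h00 ⊢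
    linarith [hbound]
  · -- C > 0
    obtain ⟨g, hg, hdist⟩ := (Metric.infDist_lt_iff hne).mp
      (show Metric.infDist f (Wn : Set H) < Metric.infDist f (Wn : Set H) + ε / C by
        linarith [div_pos hε hpos])
    have : ‖f - g‖ = dist f g := (dist_eq_norm f g).symm
    calc ‖f - G ((WithLp.equiv 2 (Y₁ × Y₂)).symm (u, A (P u)))‖
        ≤ ‖G‖ * ‖A‖ * ‖d‖ := hbound
      _ ≤ ‖G‖ * ‖A‖ * (‖f - g‖ * ‖U₁‖) :=
          mul_le_mul_of_nonneg_left (hmin g hg) hC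
      _ = C * dist f g := by rw [hCdef, this]; ring
      _ ≤ C * (Metric.infDist f (Wn : Set H) + ε / C) :=
          mul_le_mul_of_nonneg_left hdist.le hC0
      _ = C * Metric.infDist f (Wn : Set H) + ε := by
          field_simp
end

section
/- If f ∈ W_n, then the approximate reconstruction is exact: G(U₁ f, A(P_n(U₁ f))) = f. -/
/-- Reconstruction part of Corollary 1: if `f ∈ W_n = span{f₁, …, f_n}`, then the
approximate reconstruction from the learned extension is exact:
`G (U₁ f, A (P_n (U₁ f))) = f`. -/
theorem learned_reconstruction_exact_on_span
    {H Y₁ Y₂ : Type*}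
    [NormedAddCommGroup H] [InnerProductSpace ℝ H] [CompleteSpace H]
    [NormedAddCommGroup Y₁] [InnerProductSpace ℝ Y₁] [CompleteSpace Y₁]
    [NormedAddCommGroup Y₂] [InnerProductSpace ℝ Y₂] [CompleteSpace Y₂]
    (U₁ : H →L[ℝ] Y₁) (U₂ : H →L[ℝ] Y₂) (A : Y₁ →L[ℝ] Y₂)
    (hA : ∀ g : H, A (U₁ g) = U₂ g)
    (G : WithLp 2 (Y₁ × Y₂) →L[ℝ] H)
    (hG : ∀ g : H, G ((WithLp.equiv 2 (Y₁ × Y₂)).symm (U₁ g, U₂ g)) = g)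
    (n : ℕ) (fi : Fin n → H)
    (Wn : Submodule ℝ H) (hW : Wn = Submodule.span ℝ (Set.range fi))
    (Vn : Submodule ℝ Y₁)
    (hV : Vn = Submodule.span ℝ (Set.range fun i => U₁ (fi i)))
    (P : Y₁ →L[ℝ] Y₁)
    (hP : ∀ u : Y₁, P u ∈ Vn ∧ ∀ v ∈ Vn, (inner ℝ (u - P u) v : ℝ) = 0)
    (f : H) (hf : f ∈ Wn) :
    G ((WithLp.equiv 2 (Y₁ × Y₂)).symm (U₁ f, A (P (U₁ f)))) = f := by
  -- U₁ f ∈ Vn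
  have hUf : U₁ f ∈ Vn := by
    subst hW hV
    refine Submodule.span_induction (p := fun x _ => U₁ x ∈ Submodule.span ℝ
      (Set.range fun i => U₁ (fi i))) ?_ ?_ ?_ ?_ hf
    · rintro x ⟨i, rfl⟩
      exact Submodule.subset_span ⟨i, rfl⟩
    · simp
    · intro x y _ _ hx hy; simpa using Submodule.add_mem _ hx hy
    · intro c x _ hx; simpa using Submodule.smul_mem _ c hx
  -- P fixes Vn
  have hfix : P (U₁ f) = U₁ f := by
    obtain ⟨hmem, horth⟩ := hP (U₁ f)
    have hd : U₁ f - P (U₁ f) ∈ Vn := Submodule.sub_mem _ hUf hmem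
    have := horth _ hd
    have h0 : U₁ f - P (U₁ f) = 0 := by
      simpa [inner_self_eq_zero] using this
    exact (sub_eq_zero.mp h0).symm
  rw [hfix, hA]
  exact hG f
end

section
/- If the union ⋃_{n ≥ 1} W_n is dense in H (equivalently, the linear span of the sequence (f_i)_{i ∈ ℕ} is dense in H), then for every f ∈ H the approximate reconstructions converge to f: ‖f − G(U₁ f, A(P_n(U₁ f)))‖ → 0 as n → ∞. -/
/-- Reconstruction part of Corollary 2: if `⋃_{n ≥ 1} W_n` is dense in `H`, where
`W_n = span{f₁, …, f_n}`, then for every `f ∈ H` the approximate reconstructions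
converge to `f`: `‖f − G (U₁ f, A (P_n (U₁ f)))‖ → 0` as `n → ∞`. -/
theorem learned_reconstruction_convergence
    {H Y₁ Y₂ : Type*}
    [NormedAddCommGroup H] [InnerProductSpace ℝ H] [CompleteSpace H]
    [NormedAddCommGroup Y₁] [InnerProductSpace ℝ Y₁] [CompleteSpace Y₁]
    [NormedAddCommGroup Y₂] [InnerProductSpace ℝ Y₂] [CompleteSpace Y₂]
    (U₁ : H →L[ℝ] Y₁) (U₂ : H →L[ℝ] Y₂) (A : Y₁ →L[ℝ] Y₂)
    (hA : ∀ g : H, A (U₁ g) = U₂ g)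
    (G : WithLp 2 (Y₁ × Y₂) →L[ℝ] H)
    (hG : ∀ g : H, G ((WithLp.equiv 2 (Y₁ × Y₂)).symm (U₁ g, U₂ g)) = g)
    (fi : ℕ → H)
    (W : ℕ → Submodule ℝ H)
    (hW : ∀ n : ℕ, W n = Submodule.span ℝ (fi '' Set.Iio n))
    (V : ℕ → Submodule ℝ Y₁)
    (hV : ∀ n : ℕ, V n = Submodule.span ℝ ((fun g => U₁ g) '' (fi '' Set.Iio n)))
    (P : ℕ → Y₁ →L[ℝ] Y₁)
    (hP : ∀ n : ℕ, ∀ u : Y₁, P n u ∈ V n ∧ ∀ v ∈ V n, (inner ℝ (u - P n u) v : ℝ) = 0)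
    (hdense : Dense (⋃ n : ℕ, (W n : Set H)))
    (f : H) :
    Filter.Tendsto
      (fun n : ℕ =>
        ‖f - G ((WithLp.equiv 2 (Y₁ × Y₂)).symm (U₁ f, A (P n (U₁ f))))‖)
      Filter.atTop (nhds 0) := by
  -- best approximation property of P n
  have hbest : ∀ n : ℕ, ∀ u : Y₁, ∀ v ∈ V n, ‖u - P n u‖ ≤ ‖u - v‖ := by
    intro n u v hv
    have hmem : P n u - v ∈ V n := sub_mem (hP n u).1 hv
    have hinner : (inner ℝ (u - P n u) (P n u - v) : ℝ) = 0 := (hP n u).2 _ hmem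
    have hsq : ‖u - v‖ ^ 2 = ‖u - P n u‖ ^ 2 + ‖P n u - v‖ ^ 2 := by
      have : u - v = (u - P n u) + (P n u - v) := by abel
      rw [this, norm_add_sq_real, hinner]; ring
    nlinarith [norm_nonneg (u - v), norm_nonneg (u - P n u), sq_nonneg ‖P n u - v‖]
  -- bound the reconstruction error
  have key : ∀ n : ℕ,
      ‖f - G ((WithLp.equiv 2 (Y₁ × Y₂)).symm (U₁ f, A (P n (U₁ f))))‖
        ≤ ‖G‖ * ‖A‖ * ‖U₁ f - P n (U₁ f)‖ := by
    intro n
    have hdiff : (WithLp.equiv 2 (Y₁ × Y₂)).symm (U₁ f, U₂ f)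
          - (WithLp.equiv 2 (Y₁ × Y₂)).symm (U₁ f, A (P n (U₁ f)))
        = (WithLp.equiv 2 (Y₁ × Y₂)).symm (0, A (U₁ f - P n (U₁ f))) := by
      apply (WithLp.equiv 2 (Y₁ × Y₂)).injective
      ext
      · simp
      · simp [← hA f, map_sub]
    have h1 : f - G ((WithLp.equiv 2 (Y₁ × Y₂)).symm (U₁ f, A (P n (U₁ f))))
        = G ((WithLp.equiv 2 (Y₁ × Y₂)).symm (0, A (U₁ f - P n (U₁ f)))) := by
      calc f - G ((WithLp.equiv 2 (Y₁ × Y₂)).symm (U₁ f, A (P n (U₁ f))))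
          = G ((WithLp.equiv 2 (Y₁ × Y₂)).symm (U₁ f, U₂ f))
            - G ((WithLp.equiv 2 (Y₁ × Y₂)).symm (U₁ f, A (P n (U₁ f)))) := by rw [hG f]
        _ = G ((WithLp.equiv 2 (Y₁ × Y₂)).symm (U₁ f, U₂ f)
            - (WithLp.equiv 2 (Y₁ × Y₂)).symm (U₁ f, A (P n (U₁ f)))) := (map_sub G _ _).symm
        _ = _ := by rw [hdiff]
    rw [h1]
    have h2 : ‖(WithLp.equiv 2 (Y₁ × Y₂)).symm ((0 : Y₁), A (U₁ f - P n (U₁ f)))‖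
        = ‖A (U₁ f - P n (U₁ f))‖ := by
      rw [WithLp.prod_norm_eq_of_L2]
      simp [Real.sqrt_sq (norm_nonneg _)]
    calc ‖G ((WithLp.equiv 2 (Y₁ × Y₂)).symm (0, A (U₁ f - P n (U₁ f))))‖
        ≤ ‖G‖ * ‖(WithLp.equiv 2 (Y₁ × Y₂)).symm ((0 : Y₁), A (U₁ f - P n (U₁ f)))‖ :=
          G.le_opNorm _
      _ = ‖G‖ * ‖A (U₁ f - P n (U₁ f))‖ := by rw [h2]
      _ ≤ ‖G‖ * (‖A‖ * ‖U₁ f - P n (U₁ f)‖) := by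
          exact mul_le_mul_of_nonneg_left (A.le_opNorm _) (norm_nonneg G)
      _ = ‖G‖ * ‖A‖ * ‖U₁ f - P n (U₁ f)‖ := by ring
  rw [Metric.tendsto_atTop]
  intro ε hε
  set M : ℝ := ‖G‖ * ‖A‖ * ‖U₁‖ + 1 with hM
  have hMpos : 0 < M := by positivity
  obtain ⟨x, hxball, hxU⟩ := Metric.dense_iff.mp hdense f (ε / M) (by positivity)
  obtain ⟨m, hxs⟩ := Set.mem_iUnion.mp hxU
  refine ⟨m, fun n hn => ?_⟩
  -- U₁ x ∈ V n
  have hWsub : (W m : Set H) ⊆ W n := by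
    rw [hW m, hW n]
    exact Submodule.span_mono (Set.image_mono (fun a ha => lt_of_lt_of_le ha hn))
  have hxWn : x ∈ W n := hWsub hxs
  have hU₁x : U₁ x ∈ V n := by
    rw [hV n]
    rw [hW n] at hxWn
    exact Submodule.apply_mem_span_image_of_mem_span (f := (U₁ : H →ₗ[ℝ] Y₁)) hxWn
  have hdist : ‖f - x‖ ≤ ε / M := by
    rw [← dist_eq_norm, dist_comm]
    exact le_of_lt (Metric.mem_ball.mp hxball)
  have hproj : ‖U₁ f - P n (U₁ f)‖ ≤ ‖U₁‖ * (ε / M) := by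
    calc ‖U₁ f - P n (U₁ f)‖ ≤ ‖U₁ f - U₁ x‖ := hbest n (U₁ f) (U₁ x) hU₁x
      _ = ‖U₁ (f - x)‖ := by rw [map_sub]
      _ ≤ ‖U₁‖ * ‖f - x‖ := U₁.le_opNorm _
      _ ≤ ‖U₁‖ * (ε / M) := mul_le_mul_of_nonneg_left hdist (norm_nonneg _)
  have hfinal : ‖f - G ((WithLp.equiv 2 (Y₁ × Y₂)).symm (U₁ f, A (P n (U₁ f))))‖ < ε := by
    calc ‖f - G ((WithLp.equiv 2 (Y₁ × Y₂)).symm (U₁ f, A (P n (U₁ f))))‖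
        ≤ ‖G‖ * ‖A‖ * ‖U₁ f - P n (U₁ f)‖ := key n
      _ ≤ ‖G‖ * ‖A‖ * (‖U₁‖ * (ε / M)) := by
          exact mul_le_mul_of_nonneg_left hproj (by positivity)
      _ = (‖G‖ * ‖A‖ * ‖U₁‖) * (ε / M) := by ring
      _ ≤ (M - 1) * (ε / M) := by
          apply mul_le_mul_of_nonneg_right _ (by positivity)
          simp [hM]
      _ < ε := by
          rw [div_eq_inv_mul]
          have : (M - 1) * (M⁻¹ * ε) = (1 - M⁻¹) * ε := by
            field_simp
          rw [this]
          have hMi : 0 < M⁻¹ := by positivity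
          nlinarith
  rw [Real.dist_eq]
  simpa [abs_of_nonneg (norm_nonneg _)] using hfinal
end

section
/- For every f ∈ H, the zero-extension reconstruction satisfies the error estimate ‖f − G(U₁ f, 0)‖ ≤ ‖G‖ · ‖A‖ · ‖U₁‖ · ‖f‖, where ‖G‖, ‖A‖, ‖U₁‖ denote operator norms. -/
/-- Estimate (ere2z) (the case `n = 0` of Theorem 2): the reconstruction from the
zero-extended limited view data satisfies
`‖f − G (U₁ f, 0)‖ ≤ ‖G‖ ‖A‖ ‖U₁‖ ‖f‖`. -/
theorem zero_extension_reconstruction_error_estimate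
    {H Y₁ Y₂ : Type*}
    [NormedAddCommGroup H] [InnerProductSpace ℝ H] [CompleteSpace H]
    [NormedAddCommGroup Y₁] [InnerProductSpace ℝ Y₁] [CompleteSpace Y₁]
    [NormedAddCommGroup Y₂] [InnerProductSpace ℝ Y₂] [CompleteSpace Y₂]
    (U₁ : H →L[ℝ] Y₁) (U₂ : H →L[ℝ] Y₂) (A : Y₁ →L[ℝ] Y₂)
    (hA : ∀ g : H, A (U₁ g) = U₂ g)
    (G : WithLp 2 (Y₁ × Y₂) →L[ℝ] H)
    (hG : ∀ g : H, G ((WithLp.equiv 2 (Y₁ × Y₂)).symm (U₁ g, U₂ g)) = g)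
    (f : H) :
    ‖f - G ((WithLp.equiv 2 (Y₁ × Y₂)).symm (U₁ f, 0))‖ ≤ ‖G‖ * ‖A‖ * ‖U₁‖ * ‖f‖ := by
  have h1 : f - G ((WithLp.equiv 2 (Y₁ × Y₂)).symm (U₁ f, 0))
      = G ((WithLp.equiv 2 (Y₁ × Y₂)).symm (0, U₂ f)) := by
    nth_rewrite 1 [← hG f]
    rw [← map_sub]
    congr 1
    apply (WithLp.equiv 2 (Y₁ × Y₂)).injective
    simp [Prod.ext_iff]
  rw [h1]
  have h2 : ‖(WithLp.equiv 2 (Y₁ × Y₂)).symm (0, U₂ f)‖ = ‖U₂ f‖ := by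
    rw [WithLp.prod_norm_eq_of_L2]
    simp
  calc ‖G ((WithLp.equiv 2 (Y₁ × Y₂)).symm (0, U₂ f))‖
      ≤ ‖G‖ * ‖(WithLp.equiv 2 (Y₁ × Y₂)).symm (0, U₂ f)‖ := G.le_opNorm _
    _ = ‖G‖ * ‖A (U₁ f)‖ := by rw [h2, hA]
    _ ≤ ‖G‖ * (‖A‖ * (‖U₁‖ * ‖f‖)) := by
        gcongr
        exact (A.le_opNorm _).trans (by gcongr; exact U₁.le_opNorm f)
    _ = ‖G‖ * ‖A‖ * ‖U₁‖ * ‖f‖ := by ring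
end
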